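/- Completeness of the new subtyping relation with respect to BCD: if A ≤ B then A <: B. -/

import Mathlib

inductive Ty : Type where
  | U : Ty
  | const : ℕ → Ty
  | arrow : Ty → Ty → Ty
  | inter : Ty → Ty → Ty

/-- The part relation A ∈⁺ B. -/
inductive Ty.Part : Ty → Ty → Prop where
  | atomU : Ty.Part .U .U
  | atomC (n : ℕ) : Ty.Part (.const n) (.const n)
  | arrow (A B : Ty) : Ty.Part (.arrow A B) (.arrow A B)
  | interL {A B C : Ty} : Ty.Part A B → Ty.Part A (.inter B C)
  | interR {A B C : Ty} : Ty.Part A C → Ty.Part A (.inter B C)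

/-- Containment A ⊆⁺ B: every part of A is a part of B. -/
def Ty.Contain (A B : Ty) : Prop := ∀ C, Ty.Part C A → Ty.Part C B

/-- Partial domain function. -/
def Ty.dom : Ty → Option Ty
  | .arrow A _ => some A
  | .inter A B => do pure (.inter (← A.dom) (← B.dom))
  | _ => none

/-- Partial codomain function. -/
def Ty.cod : Ty → Option Ty
  | .arrow _ B => some B
  | .inter A B => do pure (.inter (← A.cod) (← B.cod))
  | _ => none

/-- The top predicate: types equivalent to U. -/
inductive Ty.Top : Ty → Prop where
  | u : Ty.Top .U
  | arrow {A B : Ty} : Ty.Top B → Ty.Top (.arrow A B)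
  | inter {A B : Ty} : Ty.Top A → Ty.Top B → Ty.Top (.inter A B)

/-- topInCod(D): some function part of D has a top codomain. -/
def Ty.TopInCod (D : Ty) : Prop := ∃ A B : Ty, Ty.Part (.arrow A B) D ∧ Ty.Top B

/-- The new subtyping relation A <: B. -/
inductive Ty.NSub : Ty → Ty → Prop where
  | reflU : Ty.NSub .U .U
  | reflC (n : ℕ) : Ty.NSub (.const n) (.const n)
  | lbL {A B C : Ty} : Ty.NSub A C → Ty.NSub (.inter A B) C
  | lbR {A B C : Ty} : Ty.NSub B C → Ty.NSub (.inter A B) C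
  | glb {A C D : Ty} : Ty.NSub A C → Ty.NSub A D → Ty.NSub A (.inter C D)
  | arrow {A B C D dB cB : Ty} :
      Ty.Contain B A → B.dom = some dB → B.cod = some cB →
      Ty.NSub C dB → Ty.NSub cB D → ¬ Ty.Top D → ¬ Ty.TopInCod B →
      Ty.NSub A (.arrow C D)
  | utop {A : Ty} : Ty.NSub A .U
  | uarrow {A C D : Ty} : Ty.Top D → Ty.NSub A (.arrow C D)

/-- BCD subtyping A ≤ B. -/
inductive Ty.BSub : Ty → Ty → Prop where
  | refl (A : Ty) : Ty.BSub A A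
  | trans {A B C : Ty} : Ty.BSub A B → Ty.BSub B C → Ty.BSub A C
  | inclL (A B : Ty) : Ty.BSub (.inter A B) A
  | inclR (A B : Ty) : Ty.BSub (.inter A B) B
  | glb {A C D : Ty} : Ty.BSub A C → Ty.BSub A D → Ty.BSub A (.inter C D)
  | arrow {A B C D : Ty} : Ty.BSub C A → Ty.BSub B D → Ty.BSub (.arrow A B) (.arrow C D)
  | distrib (A B C : Ty) : Ty.BSub (.inter (.arrow A B) (.arrow A C)) (.arrow A (.inter B C))
  | utop (A : Ty) : Ty.BSub A .U
  | uarrow (C : Ty) : Ty.BSub .U (.arrow C .U)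

/-- C→D factors A. -/
def Ty.Factors (C D A : Ty) : Prop :=
  ∃ B dB cB : Ty, Ty.Contain B A ∧ B.dom = some dB ∧ B.cod = some cB ∧
    Ty.NSub C dB ∧ Ty.NSub cB D ∧ ¬ Ty.TopInCod B

def Ty.size : Ty → ℕ
  | .U => 0
  | .const _ => 0
  | .arrow A B => 1 + A.size + B.size
  | .inter A B => 1 + A.size + B.size

def Ty.depth : Ty → ℕ
  | .U => 0
  | .const _ => 0
  | .arrow A B => 1 + max A.depth B.depth
  | .inter A B => max A.depth B.depth


namespace NSubProof

open Ty

/-- Size of a part is at most the size of the whole. -/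
theorem part_size {P B : Ty} (h : Ty.Part P B) : P.size ≤ B.size := by
  induction h with
  | atomU => exact le_refl _
  | atomC n => exact le_refl _
  | arrow A B => exact le_refl _
  | interL h ih => simp [Ty.size]; omega
  | interR h ih => simp [Ty.size]; omega

theorem part_arrow_inv {P A B : Ty} (h : Ty.Part P (.arrow A B)) : P = .arrow A B := by
  cases h; rfl

theorem part_inter_inv {P A B : Ty} (h : Ty.Part P (.inter A B)) :
    Ty.Part P A ∨ Ty.Part P B := by
  cases h with
  | interL h => exact Or.inl h
  | interR h => exact Or.inr h

theorem dom_inter_inv {A B d : Ty} (h : Ty.dom (.inter A B) = some d) :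
    ∃ d1 d2, A.dom = some d1 ∧ B.dom = some d2 ∧ d = .inter d1 d2 := by
  simp [Ty.dom, Option.bind_eq_some_iff] at h
  obtain ⟨d1, h1, d2, h2, h3⟩ := h
  exact ⟨d1, d2, h1, h2, h3.symm⟩

theorem cod_inter_inv {A B c : Ty} (h : Ty.cod (.inter A B) = some c) :
    ∃ c1 c2, A.cod = some c1 ∧ B.cod = some c2 ∧ c = .inter c1 c2 := by
  simp [Ty.cod, Option.bind_eq_some_iff] at h
  obtain ⟨c1, h1, c2, h2, h3⟩ := h
  exact ⟨c1, c2, h1, h2, h3.symm⟩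

theorem nsub_inv_inter : ∀ {A B : Ty}, Ty.NSub A B → ∀ C D, B = .inter C D →
    Ty.NSub A C ∧ Ty.NSub A D := by
  intro A B h
  induction h with
  | reflU => intro C D hCD; cases hCD
  | reflC n => intro C D hCD; cases hCD
  | lbL h ih =>
      intro C D hCD
      obtain ⟨h1, h2⟩ := ih C D hCD
      exact ⟨.lbL h1, .lbL h2⟩
  | lbR h ih =>
      intro C D hCD
      obtain ⟨h1, h2⟩ := ih C D hCD
      exact ⟨.lbR h1, .lbR h2⟩
  | glb h1 h2 ih1 ih2 =>
      intro C D hCD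
      cases hCD
      exact ⟨h1, h2⟩
  | arrow _ _ _ _ _ _ _ _ _ => intro C D hCD; cases hCD
  | utop => intro C D hCD; cases hCD
  | uarrow _ => intro C D hCD; cases hCD

/-- Subtyping of any part of the right-hand side. -/
theorem nsub_part {A B P : Ty} (h : Ty.NSub A B) (hp : Ty.Part P B) : Ty.NSub A P := by
  induction hp generalizing A with
  | atomU => exact h
  | atomC n => exact h
  | arrow X Y => exact h
  | interL hp ih => exact ih (nsub_inv_inter h _ _ rfl).1
  | interR hp ih => exact ih (nsub_inv_inter h _ _ rfl).2

theorem part_top {P B : Ty} (ht : Ty.Top B) (hp : Ty.Part P B) : Ty.Top P := by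
  induction hp with
  | atomU => exact ht
  | atomC n => cases ht
  | arrow A B => exact ht
  | interL hp ih => cases ht with | inter h1 h2 => exact ih h1
  | interR hp ih => cases ht with | inter h1 h2 => exact ih h2

/-- Top types are greatest. -/
theorem nsub_top {A B : Ty} (ht : Ty.Top B) : Ty.NSub A B := by
  induction ht with
  | u => exact .utop
  | arrow h ih => exact .uarrow h
  | inter h1 h2 ih1 ih2 => exact .glb ih1 ih2

theorem exists_arrow_part_of_cod : ∀ (B c : Ty), B.cod = some c →
    ∃ X Y, Ty.Part (.arrow X Y) B := by
  intro B
  induction B with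
  | U => intro c h; cases h
  | const n => intro c h; cases h
  | arrow X Y ih1 ih2 => intro c h; exact ⟨X, Y, .arrow X Y⟩
  | inter B1 B2 ih1 ih2 =>
      intro c h
      obtain ⟨c1, c2, h1, h2, h3⟩ := cod_inter_inv h
      obtain ⟨X, Y, hXY⟩ := ih1 c1 h1
      exact ⟨X, Y, .interL hXY⟩

theorem part_cod : ∀ (B c P : Ty), B.cod = some c → Ty.Part P c →
    ∃ X Y, Ty.Part (.arrow X Y) B ∧ Ty.Part P Y := by
  intro B
  induction B with
  | U => intro c P h; cases h
  | const n => intro c P h; cases h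
  | arrow X Y ih1 ih2 =>
      intro c P h hp
      cases h
      exact ⟨X, Y, .arrow X Y, hp⟩
  | inter B1 B2 ih1 ih2 =>
      intro c P h hp
      obtain ⟨c1, c2, h1, h2, h3⟩ := cod_inter_inv h
      subst h3
      rcases part_inter_inv hp with hp | hp
      · obtain ⟨X, Y, hXY, hPY⟩ := ih1 c1 P h1 hp
        exact ⟨X, Y, .interL hXY, hPY⟩
      · obtain ⟨X, Y, hXY, hPY⟩ := ih2 c2 P h2 hp
        exact ⟨X, Y, .interR hXY, hPY⟩

/-- If Top B and B <: D then Top D. -/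
theorem top_mono : ∀ {B D : Ty}, Ty.NSub B D → Ty.Top B → Ty.Top D := by
  intro B D h
  induction h with
  | reflU => intro ht; exact ht
  | reflC n => intro ht; cases ht
  | lbL h ih => intro ht; cases ht with | inter h1 h2 => exact ih h1
  | lbR h ih => intro ht; cases ht with | inter h1 h2 => exact ih h2
  | glb h1 h2 ih1 ih2 => intro ht; exact .inter (ih1 ht) (ih2 ht)
  | arrow hcont hd hc h1 h2 hnt hntic =>
      intro ht
      exfalso
      obtain ⟨X, Y, hXY⟩ := exists_arrow_part_of_cod _ _ hc
      have hpt : Ty.Top (Ty.arrow X Y) := part_top ht (hcont _ hXY)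
      cases hpt with
      | arrow hY => exact hntic ⟨X, Y, hXY, hY⟩
  | utop => intro ht; exact .u
  | uarrow h => intro ht; exact .arrow h

/-- The factoring lemma. -/
theorem factor_lemma : ∀ {A B : Ty}, Ty.NSub A B → ∀ X Y, Ty.Part (.arrow X Y) B →
    ¬ Ty.Top Y →
    ∃ F dF cF, Ty.Contain F A ∧ F.dom = some dF ∧ F.cod = some cF ∧
      Ty.NSub X dF ∧ Ty.NSub cF Y ∧ ¬ Ty.TopInCod F := by
  intro A B h
  induction h with
  | reflU => intro X Y hp; cases hp
  | reflC n => intro X Y hp; cases hp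
  | lbL h ih =>
      intro X Y hp hnt
      obtain ⟨F, dF, cF, hcont, hd, hc, h1, h2, h3⟩ := ih X Y hp hnt
      exact ⟨F, dF, cF, fun P hP => .interL (hcont P hP), hd, hc, h1, h2, h3⟩
  | lbR h ih =>
      intro X Y hp hnt
      obtain ⟨F, dF, cF, hcont, hd, hc, h1, h2, h3⟩ := ih X Y hp hnt
      exact ⟨F, dF, cF, fun P hP => .interR (hcont P hP), hd, hc, h1, h2, h3⟩
  | glb h1 h2 ih1 ih2 =>
      intro X Y hp hnt
      rcases part_inter_inv hp with hp | hp
      · exact ih1 X Y hp hnt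
      · exact ih2 X Y hp hnt
  | arrow hcont hd hc h1 h2 hnt hntic =>
      intro X Y hp hntY
      cases part_arrow_inv hp
      exact ⟨_, _, _, hcont, hd, hc, h1, h2, hntic⟩
  | utop => intro X Y hp; cases hp
  | uarrow h =>
      intro X Y hp hntY
      cases part_arrow_inv hp
      exact absurd h hntY

/-- Combining factors along the structure of B3. -/
theorem combine (N : ℕ)
    (IH : ∀ M : Ty, M.size < N → ∀ A C, Ty.NSub A M → Ty.NSub M C → Ty.NSub A C)
    (T E : Ty) (hE : ∀ P, Ty.Part P E → P.size ≤ N) :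
    ∀ B3 d3 c3, Ty.Contain B3 E → B3.dom = some d3 → B3.cod = some c3 →
    (∀ X Y, Ty.Part (.arrow X Y) B3 →
      ∃ F dF cF, Ty.Contain F T ∧ F.dom = some dF ∧ F.cod = some cF ∧
        Ty.NSub X dF ∧ Ty.NSub cF Y ∧ ¬ Ty.TopInCod F) →
    ∃ F dF cF, Ty.Contain F T ∧ F.dom = some dF ∧ F.cod = some cF ∧ ¬ Ty.TopInCod F ∧
      (∀ S, Ty.NSub S d3 → Ty.NSub S dF) ∧ (∀ P, Ty.Part P c3 → Ty.NSub cF P) := by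
  intro B3
  induction B3 with
  | U => intro d3 c3 _ hd; cases hd
  | const n => intro d3 c3 _ hd; cases hd
  | arrow X Y ih1 ih2 =>
      intro d3 c3 hcont hd hc hfac
      cases hd; cases hc
      obtain ⟨F, dF, cF, hFT, hFd, hFc, h1, h2, h3⟩ := hfac X Y (.arrow X Y)
      have hXsize : X.size < N := by
        have := hE _ (hcont _ (.arrow X Y))
        simp [Ty.size] at this; omega
      refine ⟨F, dF, cF, hFT, hFd, hFc, h3, ?_, ?_⟩
      · intro S hS; exact IH X hXsize S dF hS h1
      · intro P hP; exact nsub_part h2 hP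
  | inter B1 B2 ih1 ih2 =>
      intro d3 c3 hcont hd hc hfac
      obtain ⟨d1, d2, hd1, hd2, hdeq⟩ := dom_inter_inv hd
      obtain ⟨c1, c2, hc1, hc2, hceq⟩ := cod_inter_inv hc
      subst hdeq; subst hceq
      obtain ⟨F1, dF1, cF1, hF1T, hF1d, hF1c, hnt1, hdd1, hcc1⟩ :=
        ih1 d1 c1 (fun P hP => hcont P (.interL hP)) hd1 hc1
          (fun X Y hXY => hfac X Y (.interL hXY))
      obtain ⟨F2, dF2, cF2, hF2T, hF2d, hF2c, hnt2, hdd2, hcc2⟩ :=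
        ih2 d2 c2 (fun P hP => hcont P (.interR hP)) hd2 hc2
          (fun X Y hXY => hfac X Y (.interR hXY))
      refine ⟨.inter F1 F2, .inter dF1 dF2, .inter cF1 cF2, ?_, ?_, ?_, ?_, ?_, ?_⟩
      · intro P hP
        rcases part_inter_inv hP with hP | hP
        · exact hF1T P hP
        · exact hF2T P hP
      · simp [Ty.dom, hF1d, hF2d]
      · simp [Ty.cod, hF1c, hF2c]
      · rintro ⟨X, Y, hXY, hY⟩
        rcases part_inter_inv hXY with hXY | hXY
        · exact hnt1 ⟨X, Y, hXY, hY⟩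
        · exact hnt2 ⟨X, Y, hXY, hY⟩
      · intro S hS
        have h12 := nsub_inv_inter hS _ _ rfl
        exact .glb (hdd1 S h12.1) (hdd2 S h12.2)
      · intro P hP
        rcases part_inter_inv hP with hP | hP
        · exact .lbL (hcc1 P hP)
        · exact .lbR (hcc2 P hP)

/-- The cut lemma: the heart of transitivity. -/
theorem cut (N : ℕ)
    (IH : ∀ M : Ty, M.size < N → ∀ A C, Ty.NSub A M → Ty.NSub M C → Ty.NSub A C) :
    ∀ {E D' : Ty}, Ty.NSub E D' → ∀ T, (∀ P, Ty.Part P E → Ty.NSub T P) →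
      (∀ P, Ty.Part P E → P.size ≤ N) → Ty.NSub T D' := by
  intro E D' h
  induction h with
  | reflU => intro T _ _; exact .utop
  | reflC n => intro T hT _; exact hT _ (.atomC n)
  | lbL h ih =>
      intro T hT hS
      exact ih T (fun P hP => hT P (.interL hP)) (fun P hP => hS P (.interL hP))
  | lbR h ih =>
      intro T hT hS
      exact ih T (fun P hP => hT P (.interR hP)) (fun P hP => hS P (.interR hP))
  | glb h1 h2 ih1 ih2 =>
      intro T hT hS
      exact .glb (ih1 T hT hS) (ih2 T hT hS)
  | arrow hcont hd hc h1 h2 hnt hntic ih1 ih2 =>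
      intro T hT hS
      rename_i E' B3 C3 D3 d3 c3
      -- every arrow part of B3 has a factor in T
      have hfac : ∀ X Y, Ty.Part (.arrow X Y) B3 →
          ∃ F dF cF, Ty.Contain F T ∧ F.dom = some dF ∧ F.cod = some cF ∧
            Ty.NSub X dF ∧ Ty.NSub cF Y ∧ ¬ Ty.TopInCod F := by
        intro X Y hXY
        have hntY : ¬ Ty.Top Y := fun hY => hntic ⟨X, Y, hXY, hY⟩
        exact factor_lemma (hT _ (hcont _ hXY)) X Y (.arrow X Y) hntY
      obtain ⟨F, dF, cF, hFT, hFd, hFc, hFnt, hdd, hcc⟩ :=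
        combine N IH T E' hS B3 d3 c3 hcont hd hc hfac
      have hcFd3 : Ty.NSub cF D3 := by
        apply ih2 cF hcc
        intro P hP
        obtain ⟨X, Y, hXY, hPY⟩ := part_cod B3 c3 P hc hP
        have h1 := hS _ (hcont _ hXY)
        have h2 := part_size hPY
        simp [Ty.size] at h1
        omega
      exact .arrow hFT hFd hFc (hdd C3 h1) hcFd3 hnt hFnt
  | utop => intro T _ _; exact .utop
  | uarrow h => intro T _ _; exact .uarrow h

/-- Transitivity. -/
theorem nsub_trans_aux : ∀ (n : ℕ) (B : Ty), B.size < n →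
    ∀ A C, Ty.NSub A B → Ty.NSub B C → Ty.NSub A C := by
  intro n
  induction n with
  | zero => intro B hB; omega
  | succ n ih =>
      intro B hB A C h1 h2
      exact cut n ih h2 A (fun P hP => nsub_part h1 hP)
        (fun P hP => by have := part_size hP; omega)

theorem nsub_trans {A B C : Ty} (h1 : Ty.NSub A B) (h2 : Ty.NSub B C) : Ty.NSub A C :=
  nsub_trans_aux (B.size + 1) B (by omega) A C h1 h2

/-- Reflexivity. -/
theorem nsub_refl : ∀ A : Ty, Ty.NSub A A := by
  intro A
  induction A with
  | U => exact .reflU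
  | const n => exact .reflC n
  | arrow X Y ih1 ih2 =>
      by_cases hY : Ty.Top Y
      · exact .uarrow hY
      · refine .arrow (B := .arrow X Y) (fun P hP => hP) rfl rfl ih1 ih2 hY ?_
        rintro ⟨X', Y', hXY, hY'⟩
        cases part_arrow_inv hXY
        exact hY hY'
  | inter A B ih1 ih2 => exact .glb (.lbL ih1) (.lbR ih2)

/-- Admissibility of the arrow rule. -/
theorem nsub_arrow {A B C D : Ty} (h1 : Ty.NSub C A) (h2 : Ty.NSub B D) :
    Ty.NSub (.arrow A B) (.arrow C D) := by
  by_cases hD : Ty.Top D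
  · exact .uarrow hD
  · have hB : ¬ Ty.Top B := fun hB => hD (top_mono h2 hB)
    refine .arrow (B := .arrow A B) (fun P hP => hP) rfl rfl h1 h2 hD ?_
    rintro ⟨X', Y', hXY, hY'⟩
    cases part_arrow_inv hXY
    exact hB hY'

/-- Admissibility of the distributivity rule. -/
theorem nsub_distrib (A B C : Ty) :
    Ty.NSub (.inter (.arrow A B) (.arrow A C)) (.arrow A (.inter B C)) := by
  by_cases hB : Ty.Top B
  · by_cases hC : Ty.Top C
    · exact .uarrow (.inter hB hC)
    · refine .arrow (B := .arrow A C) (fun P hP => .interR hP) rfl rfl (nsub_refl A)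
        (.glb (nsub_top hB) (nsub_refl C)) (fun h => hC (by cases h with | inter h1 h2 => exact h2)) ?_
      rintro ⟨X', Y', hXY, hY'⟩
      cases part_arrow_inv hXY
      exact hC hY'
  · by_cases hC : Ty.Top C
    · refine .arrow (B := .arrow A B) (fun P hP => .interL hP) rfl rfl (nsub_refl A)
        (.glb (nsub_refl B) (nsub_top hC)) (fun h => hB (by cases h with | inter h1 h2 => exact h1)) ?_
      rintro ⟨X', Y', hXY, hY'⟩
      cases part_arrow_inv hXY
      exact hB hY'
    · refine .arrow (B := .inter (.arrow A B) (.arrow A C)) (fun P hP => hP)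
        (by simp [Ty.dom]) (by simp [Ty.cod]) (.glb (nsub_refl A) (nsub_refl A))
        (nsub_refl (.inter B C)) (fun h => hB (by cases h with | inter h1 h2 => exact h1)) ?_
      rintro ⟨X', Y', hXY, hY'⟩
      rcases part_inter_inv hXY with hXY | hXY
      · cases part_arrow_inv hXY; exact hB hY'
      · cases part_arrow_inv hXY; exact hC hY'

end NSubProof

theorem nsub_complete (A B : Ty) (h : Ty.BSub A B) : Ty.NSub A B := by
  induction h with
  | refl A => exact NSubProof.nsub_refl A
  | trans h1 h2 ih1 ih2 => exact NSubProof.nsub_trans ih1 ih2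
  | inclL A B => exact .lbL (NSubProof.nsub_refl A)
  | inclR A B => exact .lbR (NSubProof.nsub_refl B)
  | glb h1 h2 ih1 ih2 => exact .glb ih1 ih2
  | arrow h1 h2 ih1 ih2 => exact NSubProof.nsub_arrow ih1 ih2
  | distrib A B C => exact NSubProof.nsub_distrib A B C
  | utop A => exact .utop
  | uarrow C => exact .uarrow .u
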